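/- In the monoid M presented by ⟨x, y, e | e³ = e, xey = y, xe²y = x, xy = 1⟩, the elements e and 1 are not D-related: there is no c ∈ M such that (there exist u, v ∈ M with e·u = c and c·v = e) and (there exists s ∈ M with s·c = 1). Consequently M is not bisimple. -/

import Mathlib

/-- The alphabet `A = {x, y, e}`. -/
inductive Alpha : Type
  | x | y | e
  deriving DecidableEq

/-- The defining relations `e³ = e`, `xey = y`, `xe²y = x`, `xy = 1`. -/
def rel : FreeMonoid Alpha → FreeMonoid Alpha → Prop := fun a b =>
  (a = .of .e * .of .e * .of .e ∧ b = .of .e) ∨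
  (a = .of .x * .of .e * .of .y ∧ b = .of .y) ∨
  (a = .of .x * .of .e * .of .e * .of .y ∧ b = .of .x) ∨
  (a = .of .x * .of .y ∧ b = 1)

/-- The monoid `M = ⟨x, y, e | e³ = e, xey = y, xe²y = x, xy = 1⟩`. -/
abbrev M := PresentedMonoid rel

/-- The image of `x` in `M`. -/
def X : M := PresentedMonoid.of rel .x
/-- The image of `y` in `M`. -/
def Y : M := PresentedMonoid.of rel .y
/-- The image of `e` in `M`. -/
def E : M := PresentedMonoid.of rel .e

/-! ### Auxiliary development: a concrete action of `M` on `List Alpha`. -/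

/-- Left multiplication by `x` on (quasi-)normal forms. -/
def Lx : List Alpha → List Alpha
  | .y :: t => t
  | .e :: .y :: t => .y :: t
  | .e :: .e :: .y :: t => Lx t
  | [] => [.x]
  | .x :: t => .x :: .x :: t
  | .e :: [] => [.x, .e]
  | .e :: .x :: t => .x :: .e :: .x :: t
  | .e :: .e :: [] => [.x, .e, .e]
  | .e :: .e :: .x :: t => .x :: .e :: .e :: .x :: t
  | .e :: .e :: .e :: t => .x :: .e :: .e :: .e :: t

/-- Left multiplication by `e` on (quasi-)normal forms. -/
def Le : List Alpha → List Alpha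
  | .e :: .e :: t => Le t
  | [] => [.e]
  | .x :: t => .e :: .x :: t
  | .y :: t => .e :: .y :: t
  | .e :: [] => [.e, .e]
  | .e :: .x :: t => .e :: .e :: .x :: t
  | .e :: .y :: t => .e :: .e :: .y :: t

/-- The action of a single generator. -/
def act1 : Alpha → List Alpha → List Alpha
  | .x => Lx
  | .y => fun v => .y :: v
  | .e => Le

/-- The action of a word. -/
def act (w v : List Alpha) : List Alpha := w.foldr act1 v

@[simp] lemma act_nil (v : List Alpha) : act [] v = v := rfl

@[simp] lemma act_cons (a : Alpha) (w v : List Alpha) :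
    act (a :: w) v = act1 a (act w v) := rfl

/-- The generator action, packaged as endomorphisms. -/
def phi0 : Alpha → Function.End (List Alpha) := act1

lemma le3 : ∀ v, Le (Le (Le v)) = Le v
  | .e :: .e :: t => by
      have h : Le (.e :: .e :: t) = Le t := rfl
      rw [h]; exact le3 t
  | [] => rfl
  | .x :: _ => rfl
  | .y :: _ => rfl
  | .e :: [] => rfl
  | .e :: .x :: _ => rfl
  | .e :: .y :: _ => rfl

lemma end_mul_apply (f g : Function.End (List Alpha)) (x : List Alpha) :
    (f * g) x = f (g x) := rfl

lemma hrel : ∀ a b : FreeMonoid Alpha, rel a b →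
    FreeMonoid.lift phi0 a = FreeMonoid.lift phi0 b := by
  rintro a b (⟨rfl, rfl⟩ | ⟨rfl, rfl⟩ | ⟨rfl, rfl⟩ | ⟨rfl, rfl⟩) <;>
    simp only [map_mul, map_one, FreeMonoid.lift_eval_of] <;>
    funext v
  · exact le3 v
  · rfl
  · rfl
  · rfl

/-- The homomorphism realizing the action. -/
def Phi : M →* Function.End (List Alpha) := PresentedMonoid.lift phi0 hrel

lemma Phi_E : Phi E = Le := PresentedMonoid.lift_of phi0 hrel

/-- The word (as a list) mapped into `M`. -/
def toM (l : List Alpha) : M := PresentedMonoid.mk rel (.ofList l)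

lemma toM_nil : toM [] = 1 := rfl

lemma toM_cons (a : Alpha) (l : List Alpha) :
    toM (a :: l) = PresentedMonoid.of rel a * toM l := rfl

lemma Phi_toM : ∀ (l : List Alpha) (v : List Alpha), Phi (toM l) v = act l v
  | [], v => rfl
  | a :: l, v => by
      rw [toM_cons, map_mul, end_mul_apply, Phi_toM l v]
      rfl

lemma mk_rel {a b : FreeMonoid Alpha} (h : rel a b) :
    PresentedMonoid.mk rel a = PresentedMonoid.mk rel b :=
  Quotient.sound (ConGen.Rel.of a b h)

lemma relE : E * E * E = E := by
  have := mk_rel (a := .of .e * .of .e * .of .e) (b := .of .e) (Or.inl ⟨rfl, rfl⟩)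
  exact this

lemma relXEY : X * E * Y = Y := by
  have := mk_rel (a := .of .x * .of .e * .of .y) (b := .of .y)
    (Or.inr (Or.inl ⟨rfl, rfl⟩))
  exact this

lemma relXEEY : X * E * E * Y = X := by
  have := mk_rel (a := .of .x * .of .e * .of .e * .of .y) (b := .of .x)
    (Or.inr (Or.inr (Or.inl ⟨rfl, rfl⟩)))
  exact this

lemma relXY : X * Y = 1 := by
  have := mk_rel (a := .of .x * .of .y) (b := 1)
    (Or.inr (Or.inr (Or.inr ⟨rfl, rfl⟩)))
  exact this

lemma toM_Le : ∀ v, toM (Le v) = E * toM v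
  | .e :: .e :: t => by
      have h : Le (.e :: .e :: t) = Le t := rfl
      rw [h, toM_Le t, toM_cons, toM_cons]
      show E * toM t = E * (E * (E * toM t))
      rw [← mul_assoc, ← mul_assoc, relE]
  | [] => rfl
  | .x :: _ => rfl
  | .y :: _ => rfl
  | .e :: [] => rfl
  | .e :: .x :: _ => rfl
  | .e :: .y :: _ => rfl

lemma toM_Lx : ∀ v, toM (Lx v) = X * toM v
  | .y :: t => by
      show toM t = X * (Y * toM t)
      rw [← mul_assoc, relXY, one_mul]
  | .e :: .y :: t => by
      show Y * toM t = X * (E * (Y * toM t))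
      rw [← mul_assoc, ← mul_assoc, relXEY]
  | .e :: .e :: .y :: t => by
      have h : Lx (.e :: .e :: .y :: t) = Lx t := rfl
      rw [h, toM_Lx t]
      show X * toM t = X * (E * (E * (Y * toM t)))
      rw [← mul_assoc, ← mul_assoc, ← mul_assoc, relXEEY]
  | [] => rfl
  | .x :: _ => rfl
  | .e :: [] => rfl
  | .e :: .x :: _ => rfl
  | .e :: .e :: [] => rfl
  | .e :: .e :: .x :: _ => rfl
  | .e :: .e :: .e :: _ => rfl

lemma toM_act1 (g : Alpha) (v : List Alpha) :
    toM (act1 g v) = PresentedMonoid.of rel g * toM v := by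
  cases g
  · exact toM_Lx v
  · rfl
  · exact toM_Le v

lemma toM_act : ∀ (l v : List Alpha), toM (act l v) = toM l * toM v
  | [], v => by rw [act_nil, toM_nil, one_mul]
  | a :: l, v => by
      rw [act_cons, toM_act1, toM_act l v, toM_cons, mul_assoc]

/-! ### The invariant: left-invertible normal forms are `x`-free and end in `y`. -/

/-- Does the list end with `y`? -/
def endsY : List Alpha → Prop
  | [] => False
  | [a] => a = Alpha.y
  | _ :: b :: t => endsY (b :: t)

def noX (v : List Alpha) : Prop := ∀ a ∈ v, a ≠ Alpha.x

def P (v : List Alpha) : Prop := noX v ∧ (v = [] ∨ endsY v)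

lemma P_nil : P [] := ⟨fun a h => absurd h List.not_mem_nil, Or.inl rfl⟩

lemma endsY_cons₂ (a b : Alpha) (t : List Alpha) :
    endsY (a :: b :: t) ↔ endsY (b :: t) := Iff.rfl

lemma noX_cons {a : Alpha} {t : List Alpha} :
    noX (a :: t) ↔ a ≠ Alpha.x ∧ noX t := by
  constructor
  · intro h
    exact ⟨h a List.mem_cons_self, fun b hb => h b (List.mem_cons_of_mem a hb)⟩
  · rintro ⟨h1, h2⟩ b hb
    rcases List.mem_cons.mp hb with h | h
    · exact h ▸ h1
    · exact h2 b h

lemma endsY_cons_of {a : Alpha} {t : List Alpha} (ht : t ≠ []) :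
    endsY (a :: t) ↔ endsY t := by
  cases t with
  | nil => exact absurd rfl ht
  | cons b t' => exact Iff.rfl

/-- P is preserved downward by single-generator actions. -/
lemma step : ∀ (g : Alpha) (v : List Alpha), P (act1 g v) → P v
  | .y, v, h => by
      rcases h with ⟨hX, hE⟩
      have hX' : noX v := (noX_cons.mp hX).2
      refine ⟨hX', ?_⟩
      cases v with
      | nil => exact Or.inl rfl
      | cons b t =>
          rcases hE with hE | hE
          · exact absurd hE (by simp [act1])
          · exact Or.inr hE
  | .e, [], h => by
      rcases h with ⟨_, hE⟩
      rcases hE with hE | hE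
      · exact absurd hE (by simp [act1, Le])
      · exact absurd hE (by simp [act1, Le, endsY])
  | .e, .x :: t, h => by
      rcases h with ⟨hX, _⟩
      exact absurd rfl ((noX_cons.mp (noX_cons.mp hX).2).1)
  | .e, .y :: t, h => by
      rcases h with ⟨hX, hE⟩
      have hX' := (noX_cons.mp hX).2
      refine ⟨hX', Or.inr ?_⟩
      rcases hE with hE | hE
      · exact absurd hE (by simp [act1, Le])
      · exact hE
  | .e, .e :: [], h => by
      rcases h with ⟨_, hE⟩
      rcases hE with hE | hE
      · exact absurd hE (by simp [act1, Le])
      · exact absurd hE (by simp [act1, Le, endsY])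
  | .e, .e :: .x :: t, h => by
      rcases h with ⟨hX, _⟩
      have : Alpha.x ≠ Alpha.x :=
        (noX_cons.mp (noX_cons.mp (noX_cons.mp hX).2).2).1
      exact absurd rfl this
  | .e, .e :: .y :: t, h => by
      rcases h with ⟨hX, hE⟩
      have hX' := (noX_cons.mp (noX_cons.mp hX).2).2
      refine ⟨noX_cons.mpr ⟨by simp, hX'⟩, Or.inr ?_⟩
      rcases hE with hE | hE
      · exact absurd hE (by simp [act1, Le])
      · exact hE
  | .e, .e :: .e :: t, h => by
      have h' : act1 .e (.e :: .e :: t) = act1 .e t := rfl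
      rw [h'] at h
      have ht := step .e t h
      rcases ht with ⟨hX', hE'⟩
      refine ⟨noX_cons.mpr ⟨by simp, noX_cons.mpr ⟨by simp, hX'⟩⟩, Or.inr ?_⟩
      rcases hE' with rfl | hE'
      · -- t = []: then act1 e t = [e], and P [e] is false
        rcases h with ⟨_, hc⟩
        rcases hc with hc | hc
        · exact absurd hc (by simp [act1, Le])
        · exact absurd hc (by simp [act1, Le, endsY])
      · have ht' : t ≠ [] := by
          intro hnil; rw [hnil] at hE'; exact hE'
        rw [endsY_cons₂, endsY_cons_of ht']
        exact hE'
  | .x, [], h => by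
      rcases h with ⟨hX, _⟩
      exact absurd rfl (noX_cons.mp hX).1
  | .x, .x :: t, h => by
      rcases h with ⟨hX, _⟩
      exact absurd rfl (noX_cons.mp hX).1
  | .x, .y :: t, h => by
      rcases h with ⟨hX, hE⟩
      have h' : act1 .x (.y :: t) = t := rfl
      rw [h'] at hX hE
      refine ⟨noX_cons.mpr ⟨by simp, hX⟩, Or.inr ?_⟩
      rcases hE with rfl | hE
      · exact rfl
      · have ht : t ≠ [] := by
          intro hnil; rw [hnil] at hE; exact hE
        rw [endsY_cons_of ht]; exact hE
  | .x, .e :: [], h => by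
      rcases h with ⟨hX, _⟩
      exact absurd rfl (noX_cons.mp hX).1
  | .x, .e :: .x :: t, h => by
      rcases h with ⟨hX, _⟩
      exact absurd rfl (noX_cons.mp hX).1
  | .x, .e :: .y :: t, h => by
      rcases h with ⟨hX, hE⟩
      have h' : act1 .x (.e :: .y :: t) = .y :: t := rfl
      rw [h'] at hX hE
      refine ⟨noX_cons.mpr ⟨by simp, hX⟩, Or.inr ?_⟩
      rcases hE with hE | hE
      · exact absurd hE (by simp)
      · rw [endsY_cons_of (by simp)]
        exact hE
  | .x, .e :: .e :: [], h => by
      rcases h with ⟨hX, _⟩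
      exact absurd rfl (noX_cons.mp hX).1
  | .x, .e :: .e :: .x :: t, h => by
      rcases h with ⟨hX, _⟩
      exact absurd rfl (noX_cons.mp hX).1
  | .x, .e :: .e :: .e :: t, h => by
      rcases h with ⟨hX, _⟩
      exact absurd rfl (noX_cons.mp hX).1
  | .x, .e :: .e :: .y :: t, h => by
      have h' : act1 .x (.e :: .e :: .y :: t) = act1 .x t := rfl
      rw [h'] at h
      have ht := step .x t h
      rcases ht with ⟨hX', hE'⟩
      refine ⟨noX_cons.mpr ⟨by simp, noX_cons.mpr ⟨by simp,
        noX_cons.mpr ⟨by simp, hX'⟩⟩⟩, Or.inr ?_⟩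
      rcases hE' with rfl | hE'
      · exact rfl
      · have ht' : t ≠ [] := by
          intro hnil; rw [hnil] at hE'; exact hE'
        rw [endsY_cons₂, endsY_cons₂, endsY_cons_of ht']
        exact hE'

lemma actP : ∀ (l v : List Alpha), P (act l v) → P v
  | [], v, h => h
  | a :: l, v, h => actP l v (step a (act l v) (by rwa [act_cons] at h))

lemma act_nil_P {l v : List Alpha} (h : act l v = []) : P v :=
  actP l v (h ▸ P_nil)

/-! ### Counting `y`'s. -/

def cy : List Alpha → ℕ
  | [] => 0
  | .y :: t => cy t + 1
  | .x :: t => cy t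
  | .e :: t => cy t

lemma cy_Le : ∀ v, cy (Le v) = cy v
  | .e :: .e :: t => by
      have h : Le (.e :: .e :: t) = Le t := rfl
      rw [h, cy_Le t]
      rfl
  | [] => rfl
  | .x :: _ => rfl
  | .y :: _ => rfl
  | .e :: [] => rfl
  | .e :: .x :: _ => rfl
  | .e :: .y :: _ => rfl

lemma cy_act_noX : ∀ (l : List Alpha), noX l → ∀ v, cy (act l v) = cy l + cy v
  | [], _, v => by simp [cy]
  | a :: l, h, v => by
      rcases noX_cons.mp h with ⟨ha, hl⟩
      rw [act_cons]
      cases a with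
      | x => exact absurd rfl ha
      | y =>
          show cy (.y :: act l v) = cy (.y :: l) + cy v
          show cy (act l v) + 1 = cy l + 1 + cy v
          rw [cy_act_noX l hl v]; omega
      | e =>
          show cy (Le (act l v)) = cy (.e :: l) + cy v
          rw [cy_Le]
          show cy (act l v) = cy l + cy v
          exact cy_act_noX l hl v

lemma cy_pos_of_mem : ∀ (l : List Alpha), Alpha.y ∈ l → 0 < cy l
  | a :: t, h => by
      rcases List.mem_cons.mp h with rfl | h'
      · show 0 < cy t + 1
        omega
      · have := cy_pos_of_mem t h'
        cases a with
        | x => exact this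
        | y => show 0 < cy t + 1; omega
        | e => exact this

/-! ### Membership and all-e lemmas for `Le`. -/

lemma e_mem_Le : ∀ v, Alpha.e ∈ Le v
  | .e :: .e :: t => e_mem_Le t
  | [] => by simp [Le]
  | .x :: _ => by simp [Le]
  | .y :: _ => by simp [Le]
  | .e :: [] => by simp [Le]
  | .e :: .x :: _ => by simp [Le]
  | .e :: .y :: _ => by simp [Le]

lemma mem_Le : ∀ (v : List Alpha) (a : Alpha), a ∈ v → a ∈ Le v
  | .e :: .e :: t, a, h => by
      rcases List.mem_cons.mp h with rfl | h'
      · exact e_mem_Le t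
      · rcases List.mem_cons.mp h' with rfl | h''
        · exact e_mem_Le t
        · exact mem_Le t a h''
  | [], a, h => absurd h List.not_mem_nil
  | .x :: t, a, h => by
      show a ∈ .e :: .x :: t
      exact List.mem_cons_of_mem _ h
  | .y :: t, a, h => by
      show a ∈ .e :: .y :: t
      exact List.mem_cons_of_mem _ h
  | .e :: [], a, h => by
      show a ∈ [Alpha.e, Alpha.e]
      rcases List.mem_cons.mp h with rfl | h'
      · simp
      · exact absurd h' List.not_mem_nil
  | .e :: .x :: t, a, h => by
      show a ∈ .e :: .e :: .x :: t
      exact List.mem_cons_of_mem _ h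
  | .e :: .y :: t, a, h => by
      show a ∈ .e :: .e :: .y :: t
      exact List.mem_cons_of_mem _ h

lemma allE_Le : ∀ (v : List Alpha), (∀ a ∈ v, a = Alpha.e) →
    ∀ a ∈ Le v, a = Alpha.e
  | .e :: .e :: t, h => allE_Le t (fun a ha => h a (by simp [ha]))
  | [], _ => by simp [Le]
  | .x :: t, h => by
      exact absurd (h Alpha.x (by simp)) (by simp)
  | .y :: t, h => by
      exact absurd (h Alpha.y (by simp)) (by simp)
  | .e :: [], _ => by simp [Le]
  | .e :: .x :: t, h => by
      exact absurd (h Alpha.x (by simp)) (by simp)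
  | .e :: .y :: t, h => by
      exact absurd (h Alpha.y (by simp)) (by simp)

lemma not_endsY_allE : ∀ (v : List Alpha), (∀ a ∈ v, a = Alpha.e) → ¬ endsY v
  | [], _, h => h
  | [a], hall, h => by
      have := hall a (by simp)
      rw [this] at h
      exact absurd h (by simp [endsY])
  | a :: b :: t, hall, h =>
      not_endsY_allE (b :: t) (fun c hc => hall c (by simp [List.mem_cons.mp hc]))
        ((endsY_cons₂ a b t).mp h)

lemma Le_ne_nil : ∀ v, Le v ≠ []
  | .e :: .e :: t => Le_ne_nil t
  | [] => by simp [Le]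
  | .x :: _ => by simp [Le]
  | .y :: _ => by simp [Le]
  | .e :: [] => by simp [Le]
  | .e :: .x :: _ => by simp [Le]
  | .e :: .y :: _ => by simp [Le]

/-! ### The main lemma: `E` and `1` are not `D`-related. -/

lemma main_lemma : ¬ ∃ c u v s : M, E * u = c ∧ c * v = E ∧ s * c = 1 := by
  rintro ⟨c, u, v, s, hcu, hcv, hsc⟩
  -- choose word representatives
  obtain ⟨wu, hwu⟩ := PresentedMonoid.surjective_mk (rels := rel) u
  obtain ⟨wv, hwv⟩ := PresentedMonoid.surjective_mk (rels := rel) v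
  obtain ⟨ws, hws⟩ := PresentedMonoid.surjective_mk (rels := rel) s
  set lu : List Alpha := FreeMonoid.toList wu with hlu
  set lv : List Alpha := FreeMonoid.toList wv with hlv
  set ls : List Alpha := FreeMonoid.toList ws with hls
  have hu : toM lu = u := hwu
  have hv : toM lv = v := hwv
  have hs : toM ls = s := hws
  set U : List Alpha := act lu [] with hU
  -- U is the normal form of u, and u = toM U
  have hUu : toM U = u := by
    rw [hU, toM_act, toM_nil, mul_one, hu]
  -- First equation : s * (E * u) = 1, evaluated at []
  have h1 : Phi s (Phi E (Phi u [])) = [] := by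
    have : Phi (s * (E * u)) = Phi (1 : M) := by
      rw [hcu, hsc]
    rw [map_mul, map_mul, map_one] at this
    have := congrFun this []
    exact this
  have hPhiu : Phi u [] = U := by
    rw [← hu, Phi_toM]
  have h1' : act ls (Le U) = [] := by
    rw [hPhiu, Phi_E] at h1
    rw [← hs, Phi_toM] at h1
    exact h1
  have hPLeU : P (Le U) := act_nil_P h1'
  -- Second equation : (E * u) * v = E, evaluated at []
  have h2 : Phi E (Phi u (Phi v [])) = Phi E [] := by
    have : Phi (E * u * v) = Phi E := by rw [hcu, hcv]
    rw [map_mul, map_mul] at this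
    exact congrFun this []
  have hZ : Le (act U (act lv [])) = [Alpha.e] := by
    have hPhiv : Phi v [] = act lv [] := by rw [← hv, Phi_toM]
    have hPhiu2 : Phi u (act lv []) = act U (act lv []) := by
      rw [← hUu, Phi_toM]
    rw [hPhiv, hPhiu2, Phi_E] at h2
    exact h2
  -- From P (Le U) : U has no x
  have hnoXU : noX U := by
    intro a ha
    exact hPLeU.1 a (mem_Le U a ha)
  -- From the second equation : cy U = 0
  have hcyU : cy U = 0 := by
    have h3 : cy (Le (act U (act lv []))) = cy [Alpha.e] := by rw [hZ]
    rw [cy_Le] at h3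
    rw [cy_act_noX U hnoXU] at h3
    have : cy [Alpha.e] = 0 := rfl
    omega
  -- So U consists only of e's
  have hallE : ∀ a ∈ U, a = Alpha.e := by
    intro a ha
    cases a with
    | x => exact absurd rfl (hnoXU Alpha.x ha)
    | y => exact absurd (cy_pos_of_mem U ha) (by omega)
    | e => rfl
  -- Then Le U consists only of e's, so it cannot end in y
  have hLeAllE : ∀ a ∈ Le U, a = Alpha.e := allE_Le U hallE
  have hends : endsY (Le U) := by
    rcases hPLeU.2 with h | h
    · exact absurd h (Le_ne_nil U)
    · exact h
  exact not_endsY_allE (Le U) hLeAllE hends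

/-- In `M`, the elements `e` and `1` are not `D`-related; consequently `M` is not bisimple. -/
theorem stmt_3 :
    (¬ ∃ c u v s : M, E * u = c ∧ c * v = E ∧ s * c = 1) ∧
    ¬ (∀ a b : M, ∃ c : M,
        ({z : M | ∃ m : M, a * m = z} = {z : M | ∃ m : M, c * m = z}) ∧
        ({z : M | ∃ m : M, m * c = z} = {z : M | ∃ m : M, m * b = z})) := by
  constructor
  · exact main_lemma
  · intro h
    obtain ⟨c, hR, hL⟩ := h E 1
    have h1 : ∃ u : M, E * u = c := by
      have hc : c ∈ {z : M | ∃ m : M, c * m = z} := ⟨1, mul_one c⟩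
      rw [← hR] at hc
      exact hc
    have h2 : ∃ v : M, c * v = E := by
      have hE : E ∈ {z : M | ∃ m : M, E * m = z} := ⟨1, mul_one E⟩
      rw [hR] at hE
      exact hE
    have h3 : ∃ s : M, s * c = 1 := by
      have h1' : (1 : M) ∈ {z : M | ∃ m : M, m * 1 = z} := ⟨1, mul_one 1⟩
      rw [← hL] at h1'
      exact h1'
    obtain ⟨u, hu⟩ := h1
    obtain ⟨v, hv⟩ := h2
    obtain ⟨s, hs⟩ := h3
    exact main_lemma ⟨c, u, v, s, hu, hv, hs⟩
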